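/- Consider the group K presented by generators xᵢ for i ∈ ℤ and relations xᵢ = x_{i+1}² and x_{i+1} = xᵢ² for all i ∈ ℤ. Then K is cyclic of order 3. -/

import Mathlib

namespace ICC

abbrev rels : Set (FreeGroup ℤ) :=
  {r : FreeGroup ℤ |
      ∃ i : ℤ, r = (FreeGroup.of i)⁻¹ * FreeGroup.of (i + 1) ^ 2 ∨
        r = (FreeGroup.of (i + 1))⁻¹ * FreeGroup.of i ^ 2}

abbrev K := PresentedGroup rels

abbrev y (i : ℤ) : K := PresentedGroup.of i

lemma rel_eq_one {r : FreeGroup ℤ} (hr : r ∈ rels) : PresentedGroup.mk rels r = 1 :=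
  (QuotientGroup.eq_one_iff r).2 (Subgroup.subset_normalClosure hr)

lemma rel1 (i : ℤ) : y i = y (i + 1) ^ 2 := by
  have h := rel_eq_one (r := (FreeGroup.of i)⁻¹ * FreeGroup.of (i + 1) ^ 2) ⟨i, Or.inl rfl⟩
  have h2 : (y i)⁻¹ * y (i + 1) ^ 2 = 1 := by simpa [y, PresentedGroup.of] using h
  rw [inv_mul_eq_one] at h2
  exact h2

lemma rel2 (i : ℤ) : y (i + 1) = y i ^ 2 := by
  have h := rel_eq_one (r := (FreeGroup.of (i + 1))⁻¹ * FreeGroup.of i ^ 2) ⟨i, Or.inr rfl⟩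
  have h2 : (y (i + 1))⁻¹ * y i ^ 2 = 1 := by simpa [y, PresentedGroup.of] using h
  rw [inv_mul_eq_one] at h2
  exact h2

lemma cube (i : ℤ) : y i ^ 3 = 1 := by
  have h : y i = y i ^ 4 := by
    calc y i = y (i + 1) ^ 2 := rel1 i
    _ = (y i ^ 2) ^ 2 := by rw [← rel2 i]
    _ = y i ^ 4 := by group
  have h2 : y i * 1 = y i * y i ^ 3 := by
    rw [mul_one]; nth_rewrite 1 [h]; group
  exact (mul_left_cancel h2).symm

lemma mem_zpowers (i : ℤ) : y i ∈ Subgroup.zpowers (y 0) := by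
  induction i using Int.induction_on with
  | zero => exact Subgroup.mem_zpowers _
  | succ n ih => rw [rel2]; exact pow_mem ih 2
  | pred n ih =>
      have h := rel1 (-(n : ℤ) - 1)
      rw [sub_add_cancel] at h
      rw [h]
      exact pow_mem ih 2

def f : ℤ → Multiplicative (ZMod 3) := fun i =>
  Multiplicative.ofAdd (if Even i then (1 : ZMod 3) else 2)

lemma f_rel : ∀ r ∈ rels, FreeGroup.lift f r = 1 := by
  rintro r ⟨i, h | h⟩ <;> subst h <;> by_cases he : Even i <;>
    simp only [map_mul, map_inv, map_pow, FreeGroup.lift_apply_of, f, Int.even_add_one, he,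
      not_true, not_false_iff, if_true, if_false] <;> decide

def φ : K →* Multiplicative (ZMod 3) := PresentedGroup.toGroup f_rel

lemma φ_y0 : φ (y 0) = Multiplicative.ofAdd (1 : ZMod 3) := by
  simp [φ, f, y, PresentedGroup.toGroup.of]

end ICC

namespace ICC

lemma φ_zpow (k : ℤ) : φ (y 0 ^ k) = Multiplicative.ofAdd ((k : ZMod 3)) := by
  rw [map_zpow, φ_y0, ← ofAdd_zsmul, zsmul_eq_mul, mul_one]

lemma φ_bij : Function.Bijective φ := by
  constructor
  · rw [← MonoidHom.ker_eq_bot_iff, eq_bot_iff]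
    intro g hg
    have hmem : g ∈ Subgroup.zpowers (y 0) := by
      have htop : g ∈ Subgroup.closure (Set.range (PresentedGroup.of : ℤ → K)) := by
        rw [PresentedGroup.closure_range_of]; trivial
      refine (Subgroup.closure_le _).2 ?_ htop
      rintro _ ⟨i, rfl⟩
      exact mem_zpowers i
    obtain ⟨k, rfl⟩ := hmem
    have h1 : φ (y 0 ^ k) = 1 := hg
    rw [φ_zpow] at h1
    have h2 : ((k : ZMod 3)) = 0 := h1
    obtain ⟨m, rfl⟩ := (ZMod.intCast_zmod_eq_zero_iff_dvd k 3).1 h2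
    have h3 : (y 0 : K) ^ (3 : ℤ) = 1 := by
      have := cube 0
      simpa using this
    simp [zpow_mul, h3]
  · intro m
    refine ⟨y 0 ^ ((m.toAdd).val : ℤ), ?_⟩
    rw [φ_zpow]
    simp [ZMod.natCast_val, ZMod.intCast_cast, ZMod.cast_id]

noncomputable def e : K ≃* Multiplicative (ZMod 3) := MulEquiv.ofBijective φ φ_bij

end ICC


/-- The group `⟨xᵢ (i ∈ ℤ) | xᵢ = x_{i+1}², x_{i+1} = xᵢ²⟩` is cyclic of order 3. -/
theorem infinite_cyclic_cover_group :
    Nonempty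
      (PresentedGroup {r : FreeGroup ℤ |
          ∃ i : ℤ, r = (FreeGroup.of i)⁻¹ * FreeGroup.of (i + 1) ^ 2 ∨
            r = (FreeGroup.of (i + 1))⁻¹ * FreeGroup.of i ^ 2} ≃*
        Multiplicative (ZMod 3)) :=
  ⟨ICC.e⟩
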